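/- Let F be a voting method satisfying positive involvement and the Condorcet winner criterion. Let P be a profile in which for all candidates x, x', y, y' in X(P) with x ≠ x' and y ≠ y', if Margin_P(x,x') > Margin_P(y,y'), then Margin_P(x,x') > Margin_P(y,y') + 1. Then F(P) ⊆ D(P), where D(P) is the defensible set of P. -/

import Mathlib

open scoped Classical

/-- A preference profile: each voter in a nonempty finite set of voters is assigned
a strict weak order (here given globally on the candidate type) over a nonempty
finite set of candidates. -/
structure Profile (V X : Type*) where
  voters : Finset V
  voters_nonempty : voters.Nonempty
  cands : Finset X
  cands_nonempty : cands.Nonempty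
  /-- `rank i x y` means voter `i` ranks `x` strictly above `y`. -/
  rank : V → X → X → Prop
  irrefl : ∀ i x, ¬ rank i x x
  trans : ∀ i x y z, rank i x y → rank i y z → rank i x z
  incomp_trans : ∀ i x y z, (¬ rank i x y ∧ ¬ rank i y x) →
    (¬ rank i y z ∧ ¬ rank i z y) → (¬ rank i x z ∧ ¬ rank i z x)

namespace Profile

variable {V X : Type*}

/-- The margin of `x` vs. `y`: the number of voters ranking `x` above `y`
minus the number of voters ranking `y` above `x`. -/
noncomputable def margin (P : Profile V X) (x y : X) : ℤ :=
  ((P.voters.filter fun i => P.rank i x y).card : ℤ) -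
    ((P.voters.filter fun i => P.rank i y x).card : ℤ)

/-- The sum of two profiles (intended for use when `P.voters` and `Q.voters` are
disjoint and `P.cands = Q.cands`). -/
noncomputable def add (P Q : Profile V X) : Profile V X where
  voters := P.voters ∪ Q.voters
  voters_nonempty := P.voters_nonempty.mono Finset.subset_union_left
  cands := P.cands
  cands_nonempty := P.cands_nonempty
  rank i x y := if i ∈ P.voters then P.rank i x y else Q.rank i x y
  irrefl := by
    intro i x
    by_cases h : i ∈ P.voters
    · simp only [if_pos h]; exact P.irrefl i x
    · simp only [if_neg h]; exact Q.irrefl i x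
  trans := by
    intro i x y z
    by_cases h : i ∈ P.voters
    · simp only [if_pos h]; exact P.trans i x y z
    · simp only [if_neg h]; exact Q.trans i x y z
  incomp_trans := by
    intro i x y z
    by_cases h : i ∈ P.voters
    · simp only [if_pos h]; exact P.incomp_trans i x y z
    · simp only [if_neg h]; exact Q.incomp_trans i x y z

end Profile

variable {V X : Type*}

/-- `F` is a voting method: it assigns to each profile a nonempty set of winners
among the candidates. -/
def IsVotingMethod (F : Profile V X → Finset X) : Prop :=
  ∀ P : Profile V X, (F P).Nonempty ∧ F P ⊆ P.cands

/-- The Condorcet winner criterion. -/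
def CondorcetWinnerCriterion (F : Profile V X → Finset X) : Prop :=
  ∀ P : Profile V X, ∀ x ∈ P.cands,
    (∀ y ∈ P.cands, y ≠ x → 0 < P.margin x y) → F P = {x}

/-- The Condorcet loser criterion. -/
def CondorcetLoserCriterion (F : Profile V X → Finset X) : Prop :=
  ∀ P : Profile V X, ∀ x ∈ P.cands,
    (∀ y ∈ P.cands, y ≠ x → 0 < P.margin y x) → x ∉ F P

/-- Every voter of `Q` ranks `x` uniquely first (strictly above every other candidate). -/
def RanksUniquelyFirst (Q : Profile V X) (x : X) : Prop :=
  ∀ i ∈ Q.voters, ∀ y ∈ Q.cands, y ≠ x → Q.rank i x y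

/-- Every voter of `Q` ranks `x` uniquely last (strictly below every other candidate). -/
def RanksUniquelyLast (Q : Profile V X) (x : X) : Prop :=
  ∀ i ∈ Q.voters, ∀ y ∈ Q.cands, y ≠ x → Q.rank i y x

/-- Positive involvement. -/
def PositiveInvolvement (F : Profile V X → Finset X) : Prop :=
  ∀ (P Px : Profile V X), ∀ x ∈ P.cands,
    Disjoint P.voters Px.voters → Px.cands = P.cands → Px.voters.card = 1 →
    RanksUniquelyFirst Px x → x ∈ F P → x ∈ F (P.add Px)

/-- Negative involvement. -/
def NegativeInvolvement (F : Profile V X → Finset X) : Prop :=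
  ∀ (P Px : Profile V X), ∀ x ∈ P.cands,
    Disjoint P.voters Px.voters → Px.cands = P.cands → Px.voters.card = 1 →
    RanksUniquelyLast Px x → x ∉ F P → x ∉ F (P.add Px)

/-- Resolvability: any tied winner can be made the unique winner by adding a single voter. -/
def Resolvability (F : Profile V X → Finset X) : Prop :=
  ∀ P : Profile V X, 1 < (F P).card → ∀ x ∈ F P,
    ∃ S : Profile V X, S.voters.card = 1 ∧ Disjoint P.voters S.voters ∧
      S.cands = P.cands ∧ F (P.add S) = {x}

/-- `n`-voter resolvability: any tied winner can be made the unique winner by adding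
a set of at most `n` voters. -/
def NVoterResolvability (n : ℕ) (F : Profile V X → Finset X) : Prop :=
  ∀ P : Profile V X, 1 < (F P).card → ∀ x ∈ F P,
    ∃ Q : Profile V X, Q.voters.card ≤ n ∧ Disjoint P.voters Q.voters ∧
      Q.cands = P.cands ∧ F (P.add Q) = {x}

/-- The defensible set of a profile. -/
def defensibleSet (P : Profile V X) : Set X :=
  {x | x ∈ P.cands ∧ ∀ y ∈ P.cands, ∃ z ∈ P.cands, P.margin y x ≤ P.margin z y}


section Aux

variable {V X : Type*}

lemma margin_self (P : Profile V X) (a : X) : P.margin a a = 0 := by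
  simp [Profile.margin]

lemma margin_neg (P : Profile V X) (a b : X) : P.margin a b = - P.margin b a := by
  simp [Profile.margin]

lemma margin_add (P Q : Profile V X) (h : Disjoint P.voters Q.voters) (a b : X) :
    (P.add Q).margin a b = P.margin a b + Q.margin a b := by
  have key : ∀ c d : X, ((P.add Q).voters.filter fun i => (P.add Q).rank i c d)
      = (P.voters.filter fun i => P.rank i c d) ∪ (Q.voters.filter fun i => Q.rank i c d) := by
    intro c d
    ext j
    simp only [Finset.mem_filter, Finset.mem_union]; simp only [Profile.add, Finset.mem_union]
    constructor
    · rintro ⟨hj | hj, hr⟩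
      · left; exact ⟨hj, by simpa [hj] using hr⟩
      · by_cases hp : j ∈ P.voters
        · left; exact ⟨hp, by simpa [hp] using hr⟩
        · right; exact ⟨hj, by simpa [hp] using hr⟩
    · rintro (⟨hj, hr⟩ | ⟨hj, hr⟩)
      · exact ⟨Or.inl hj, by simpa [hj] using hr⟩
      · have hp : j ∉ P.voters := fun hp => (Finset.disjoint_left.mp h hp) hj
        exact ⟨Or.inr hj, by simpa [hp] using hr⟩
  have hd : ∀ c d : X, Disjoint (P.voters.filter fun i => P.rank i c d)
      (Q.voters.filter fun i => Q.rank i c d) :=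
    fun c d => h.mono (Finset.filter_subset _ _) (Finset.filter_subset _ _)
  unfold Profile.margin
  rw [key a b, key b a, Finset.card_union_of_disjoint (hd a b),
    Finset.card_union_of_disjoint (hd b a)]
  push_cast; ring

/-- A single-voter ballot determined by a level function (lower level = ranked higher). -/
noncomputable def ballot (i : V) (cs : Finset X) (hc : cs.Nonempty) (lvl : X → ℕ) :
    Profile V X where
  voters := {i}
  voters_nonempty := ⟨i, Finset.mem_singleton_self i⟩
  cands := cs
  cands_nonempty := hc
  rank _ a b := lvl a < lvl b
  irrefl := by intro _ a; simp
  trans := by intro _ a b c hab hbc; exact lt_trans hab hbc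
  incomp_trans := by
    intro _ a b c h1 h2
    simp only [not_lt] at h1 h2 ⊢
    omega

lemma ballot_margin (i : V) (cs : Finset X) (hc : cs.Nonempty) (lvl : X → ℕ) (a b : X) :
    (ballot i cs hc lvl).margin a b =
      (if lvl a < lvl b then (1 : ℤ) else 0) - (if lvl b < lvl a then (1 : ℤ) else 0) := by
  simp [Profile.margin, ballot, Finset.filter_singleton]
  split_ifs <;> simp [Finset.filter_singleton, *]

/-- Level function: `x` first, `y` second, everything else third. -/
noncomputable def lvl3 [DecidableEq X] (x y : X) : X → ℕ :=
  fun a => if a = x then 0 else if a = y then 1 else 2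

/-- The margin contribution of a single ballot with level function `lvl3 x y`. -/
noncomputable def delta3 [DecidableEq X] (x y a b : X) : ℤ :=
  (if lvl3 x y a < lvl3 x y b then (1 : ℤ) else 0) -
    (if lvl3 x y b < lvl3 x y a then (1 : ℤ) else 0)

lemma delta3_yx [DecidableEq X] {x y : X} (h : x ≠ y) : delta3 x y y x = -1 := by
  simp [delta3, lvl3, h, Ne.symm h]

lemma delta3_yz [DecidableEq X] {x y z : X} (h : x ≠ y) (h1 : z ≠ x) (h2 : z ≠ y) :
    delta3 x y y z = 1 := by
  simp [delta3, lvl3, h, Ne.symm h, h1, h2]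

lemma lvl3_first [DecidableEq X] {x y a : X} (h : a ≠ x) : lvl3 x y x < lvl3 x y a := by
  simp only [lvl3, if_pos rfl, if_neg h]
  split_ifs <;> omega

end Aux

/-- Lemma on positive involvement, the Condorcet winner criterion,
and the defensible set: if `F` is a voting method satisfying positive involvement and
the Condorcet winner criterion, and `P` is a profile in which any two distinct margins
between distinct candidates differ by more than 1, then `F P` is contained in the
defensible set of `P`. -/
theorem defensible_of_posInv_condorcetWinner
    {V X : Type*} [Infinite V] [Infinite X]
    (F : Profile V X → Finset X) (hF : IsVotingMethod F)
    (hPI : PositiveInvolvement F) (hCW : CondorcetWinnerCriterion F)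
    (P : Profile V X)
    (hsep : ∀ x ∈ P.cands, ∀ x' ∈ P.cands, ∀ y ∈ P.cands, ∀ y' ∈ P.cands,
      x ≠ x' → y ≠ y' → P.margin y y' < P.margin x x' →
      P.margin y y' + 1 < P.margin x x') :
    ↑(F P) ⊆ defensibleSet P := by
  classical
  intro x hxF
  simp only [Finset.coe_subset, Finset.mem_coe] at hxF
  have hxP : x ∈ P.cands := (hF P).2 hxF
  refine ⟨hxP, ?_⟩
  by_contra hcon
  push_neg at hcon
  obtain ⟨y, hyP, hy⟩ := hcon
  -- hy : ∀ z ∈ P.cands, P.margin z y < P.margin y x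
  have hm0 : 0 < P.margin y x := by
    have := hy y hyP
    rwa [margin_self] at this
  have hxy : x ≠ y := by
    rintro rfl
    rw [margin_self] at hm0
    exact lt_irrefl 0 hm0
  have key : ∀ k : ℕ, ∃ R : Profile V X, R.cands = P.cands ∧
      (∀ a b : X, R.margin a b = P.margin a b + (k : ℤ) * delta3 x y a b) ∧ x ∈ F R := by
    intro k
    induction k with
    | zero => exact ⟨P, rfl, by intro a b; simp, hxF⟩
    | succ k ih =>
      obtain ⟨R, hRc, hRm, hxR⟩ := ih
      obtain ⟨i, hi⟩ := R.voters.exists_notMem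
      have hdisj : Disjoint R.voters
          (ballot i R.cands R.cands_nonempty (lvl3 x y)).voters := by
        simp [ballot, Finset.disjoint_singleton_right, hi]
      refine ⟨R.add (ballot i R.cands R.cands_nonempty (lvl3 x y)), hRc, ?_, ?_⟩
      · intro a b
        rw [margin_add _ _ hdisj a b, hRm a b, ballot_margin]
        show _ = _ + _ * delta3 x y a b
        unfold delta3
        push_cast
        ring
      · refine hPI R _ x (hRc ▸ hxP) hdisj rfl rfl ?_ hxR
        intro j _ a _ hax
        exact lvl3_first hax
  obtain ⟨R, hRc, hRm, hxR⟩ := key (P.margin y x - 1).toNat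
  have hk : (((P.margin y x - 1).toNat : ℤ)) = P.margin y x - 1 :=
    Int.toNat_of_nonneg (by omega)
  have hyCW : F R = {y} := by
    apply hCW R y (hRc ▸ hyP)
    intro z hz hzy
    have hzP : z ∈ P.cands := hRc ▸ hz
    rw [hRm y z, hk]
    by_cases hzx : z = x
    · rw [hzx, delta3_yx hxy]
      have : P.margin y x = P.margin y x := rfl
      omega
    · rw [delta3_yz hxy hzx hzy]
      have hsep' := hsep y hyP x hxP z hzP y hyP (Ne.symm hxy) hzy (hy z hzP)
      have hanti : P.margin y z = - P.margin z y := margin_neg P y z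
      omega
  rw [hyCW] at hxR
  exact hxy (Finset.mem_singleton.mp hxR)
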